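/- Let $1 < p < \infty$, let $\sigma, \omega$ be locally finite Borel measures on $\mathbb{R}^n$, and let $T$ be a Calderón–Zygmund operator with kernel $K$ satisfying $|K(x,y)| \leq C_{CZ} |x-y|^{-n}$. Then the full testing constant is controlled by the triple testing constant plus the two-tailed Muckenhoupt characteristic: $\mathfrak{FT}_{T,p}(\sigma, \omega) \lesssim \mathcal{A}_p(\sigma, \omega) + \mathfrak{TR}_{T,p}(\sigma, \omega)$. -/

import Mathlib

open MeasureTheory Set ENNReal

/-- The axis-parallel half-open cube with corner `a` and sidelength `l`. -/
def cubeSet {n : ℕ} (a : Fin n → ℝ) (l : ℝ) : Set (Fin n → ℝ) :=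
  {x | ∀ i, x i ∈ Set.Ico (a i) (a i + l)}

/-- The concentric triple `3Q` of the cube with corner `a` and sidelength `l`. -/
def tripleCube {n : ℕ} (a : Fin n → ℝ) (l : ℝ) : Set (Fin n → ℝ) :=
  cubeSet (fun i => a i - l) (3 * l)

/-- `T_σ 1_Q (x) = ∫_Q K(x,y) dσ(y)`. -/
noncomputable def Tcube {n : ℕ} (K : (Fin n → ℝ) → (Fin n → ℝ) → ℝ)
    (σ : Measure (Fin n → ℝ)) (a : Fin n → ℝ) (l : ℝ) (x : Fin n → ℝ) : ℝ :=
  ∫ y in cubeSet a l, K x y ∂σ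

/-- The full testing characteristic `𝔉𝔗_{T,p}(σ,ω)`. -/
noncomputable def fullTesting {n : ℕ} (K : (Fin n → ℝ) → (Fin n → ℝ) → ℝ)
    (p : ℝ) (σ ω : Measure (Fin n → ℝ)) : ℝ≥0∞ :=
  (⨆ (a : Fin n → ℝ) (l : ℝ) (_ : 0 < l),
    (∫⁻ x, ((‖Tcube K σ a l x‖₊ : ℝ≥0∞)) ^ p ∂ω) / σ (cubeSet a l)) ^ (1 / p)

/-- The triple testing characteristic `𝔗ℜ_{T,p}(σ,ω)`. -/
noncomputable def tripleTesting {n : ℕ} (K : (Fin n → ℝ) → (Fin n → ℝ) → ℝ)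
    (p : ℝ) (σ ω : Measure (Fin n → ℝ)) : ℝ≥0∞ :=
  (⨆ (a : Fin n → ℝ) (l : ℝ) (_ : 0 < l),
    (∫⁻ x in tripleCube a l, ((‖Tcube K σ a l x‖₊ : ℝ≥0∞)) ^ p ∂ω) / σ (cubeSet a l)) ^ (1 / p)

/-- The two-tailed Muckenhoupt characteristic `𝒜_p(σ,ω)`. -/
noncomputable def tailedAp (n : ℕ) (p p' : ℝ) (σ ω : Measure (Fin n → ℝ)) : ℝ≥0∞ :=
  ⨆ (a : Fin n → ℝ) (l : ℝ) (_ : 0 < l),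
    ((ENNReal.ofReal (l ^ n))⁻¹ *
      ∫⁻ x, ENNReal.ofReal ((l ^ n / (l + Metric.infDist x (cubeSet a l)) ^ n) ^ p) ∂ω) ^ (1 / p) *
    ((ENNReal.ofReal (l ^ n))⁻¹ *
      ∫⁻ x, ENNReal.ofReal ((l ^ n / (l + Metric.infDist x (cubeSet a l)) ^ n) ^ p') ∂σ) ^ (1 / p')

lemma cubeSet_measurable {n : ℕ} (a : Fin n → ℝ) (l : ℝ) : MeasurableSet (cubeSet a l) := by
  have : cubeSet a l = Set.pi Set.univ (fun i => Set.Ico (a i) (a i + l)) := by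
    ext x; simp [cubeSet, Set.pi]
  rw [this]
  exact MeasurableSet.univ_pi fun i => measurableSet_Ico

lemma cubeSet_subset_ball {n : ℕ} (a : Fin n → ℝ) {l : ℝ} (hl : 0 < l) :
    cubeSet a l ⊆ Metric.closedBall a l := by
  intro x hx
  rw [Metric.mem_closedBall]
  rw [dist_pi_le_iff hl.le]
  intro i
  have h := hx i
  rw [Real.dist_eq, abs_le]
  constructor <;> [linarith [h.1]; linarith [h.2]]

lemma cube_measure_lt_top {n : ℕ} (σ : Measure (Fin n → ℝ)) [IsLocallyFiniteMeasure σ]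
    (a : Fin n → ℝ) {l : ℝ} (hl : 0 < l) : σ (cubeSet a l) < ∞ :=
  lt_of_le_of_lt (measure_mono (cubeSet_subset_ball a hl)) (measure_closedBall_lt_top)

lemma dist_lower {n : ℕ} {a : Fin n → ℝ} {l : ℝ} (hl : 0 < l) {x y : Fin n → ℝ}
    (hx : x ∉ tripleCube a l) (hy : y ∈ cubeSet a l) :
    l ≤ dist x y := by
  simp only [tripleCube, cubeSet, Set.mem_setOf_eq, Set.mem_Ico] at hx hy
  push_neg at hx
  obtain ⟨i, hi⟩ := hx
  have hyi := hy i
  have hcoord : l ≤ |x i - y i| := by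
    rcases le_or_gt (a i - l) (x i) with h1 | h1
    · have h2 := hi h1
      rw [le_abs]
      left; linarith [hyi.2]
    · rw [le_abs]
      right; linarith [hyi.1]
  calc l ≤ |x i - y i| := hcoord
    _ = dist (x i) (y i) := (Real.dist_eq _ _).symm
    _ ≤ dist x y := dist_le_pi_dist x y i

lemma Tcube_bound {n : ℕ} (K : (Fin n → ℝ) → (Fin n → ℝ) → ℝ)
    (σ : Measure (Fin n → ℝ)) (a : Fin n → ℝ) {l : ℝ} (hl : 0 < l)
    {CCZ : ℝ} (hCCZ : 0 ≤ CCZ)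
    (hK : ∀ x y, x ≠ y → |K x y| ≤ CCZ / dist x y ^ n)
    (x : Fin n → ℝ) (hx : x ∉ tripleCube a l) :
    (‖Tcube K σ a l x‖₊ : ℝ≥0∞) ≤
      ENNReal.ofReal (2^n * CCZ / (l + Metric.infDist x (cubeSet a l))^n) * σ (cubeSet a l) := by
  set d := Metric.infDist x (cubeSet a l) with hd
  have hd0 : 0 ≤ d := Metric.infDist_nonneg
  have hld : 0 < l + d := by linarith
  have hbound : ∀ y ∈ cubeSet a l, (‖K x y‖₊ : ℝ≥0∞) ≤ ENNReal.ofReal (2^n * CCZ / (l+d)^n) := by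
    intro y hy
    have h1 : l ≤ dist x y := dist_lower hl hx hy
    have h2 : d ≤ dist x y := Metric.infDist_le_dist_of_mem hy
    have hxy : x ≠ y := by
      intro h; rw [h, dist_self] at h1; linarith
    have h4 : (0:ℝ) < (l + d)/2 := by linarith
    have h5 : |K x y| ≤ CCZ / ((l+d)/2)^n := by
      refine (hK x y hxy).trans ?_
      gcongr
      linarith
    have heq : CCZ / ((l+d)/2)^n = 2^n * CCZ/(l+d)^n := by
      rw [div_pow, div_div_eq_mul_div, mul_comm]
    rw [← enorm_eq_nnnorm, Real.enorm_eq_ofReal_abs]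
    exact ENNReal.ofReal_le_ofReal (by rw [← heq]; exact h5)
  calc (‖Tcube K σ a l x‖₊ : ℝ≥0∞)
      ≤ ∫⁻ y in cubeSet a l, ‖K x y‖₊ ∂σ := enorm_integral_le_lintegral_enorm _
    _ ≤ ∫⁻ _ in cubeSet a l, ENNReal.ofReal (2^n*CCZ/(l+d)^n) ∂σ :=
        setLIntegral_mono' (cubeSet_measurable a l) hbound
    _ = ENNReal.ofReal (2^n*CCZ/(l+d)^n) * σ (cubeSet a l) := setLIntegral_const _ _

/-- Full testing is controlled by triple testing plus the two-tailed Muckenhoupt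
characteristic, for Calderón–Zygmund kernels of size `|K(x,y)| ≤ C_CZ |x-y|^{-n}`. -/
theorem stmt4 (n : ℕ) (hn : 1 ≤ n) (p p' : ℝ) (hp : 1 < p) (hpp' : 1 / p + 1 / p' = 1)
    (CCZ : ℝ) (hCCZ : 0 ≤ CCZ) :
    ∃ C : ℝ≥0∞, 0 < C ∧ C < ∞ ∧
      ∀ (K : (Fin n → ℝ) → (Fin n → ℝ) → ℝ), Measurable (Function.uncurry K) →
        (∀ x y, x ≠ y → |K x y| ≤ CCZ / dist x y ^ n) →
        ∀ (σ ω : Measure (Fin n → ℝ)) [IsLocallyFiniteMeasure σ] [IsLocallyFiniteMeasure ω],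
          fullTesting K p σ ω ≤ C * (tailedAp n p p' σ ω + tripleTesting K p σ ω) := by
  have hp0 : 0 < p := lt_trans one_pos hp
  have hpne : p ≠ 0 := hp0.ne'
  have h1p : (0:ℝ) < 1/p := by positivity
  have h1plt : 1/p < 1 := by rw [div_lt_one hp0]; exact hp
  have h1p' : (0:ℝ) < 1/p' := by linarith
  have hp'0 : 0 < p' := by
    by_contra h
    push_neg at h
    rcases eq_or_lt_of_le h with h | h
    · rw [h] at h1p'; norm_num at h1p'
    · have : 1/p' < 0 := div_neg_of_pos_of_neg one_pos h
      linarith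
  have hp'ne : p' ≠ 0 := hp'0.ne'
  have hpp'2 : (1/p') * p = p - 1 := by
    have h' : 1/p' = 1 - 1/p := by linarith
    rw [h', sub_mul, one_mul, one_div, inv_mul_cancel₀ hpne]
  have hp1 : (0:ℝ) ≤ p - 1 := by linarith
  set c0 : ℝ≥0∞ := ENNReal.ofReal (2^n * CCZ) with hc0
  refine ⟨1 + c0, lt_of_lt_of_le zero_lt_one le_self_add,
    ENNReal.add_lt_top.mpr ⟨ENNReal.one_lt_top, ENNReal.ofReal_lt_top⟩, ?_⟩
  intro K hKmeas hK σ ω _ _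
  set Ap := tailedAp n p p' σ ω with hAp
  set Tr := tripleTesting K p σ ω with hTr
  -- main per-cube estimate
  have main : ∀ (a : Fin n → ℝ) (l : ℝ), 0 < l →
      (∫⁻ x, ((‖Tcube K σ a l x‖₊ : ℝ≥0∞)) ^ p ∂ω) / σ (cubeSet a l)
        ≤ (c0 * Ap)^p + Tr^p := by
    intro a l hl
    have hQmeas : MeasurableSet (cubeSet a l) := cubeSet_measurable a l
    have hEmeas : MeasurableSet (tripleCube a l) := cubeSet_measurable _ _
    have hQfin : σ (cubeSet a l) ≠ ∞ := (cube_measure_lt_top σ a hl).ne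
    by_cases hσ0 : σ (cubeSet a l) = 0
    · have hT : ∀ x, Tcube K σ a l x = 0 := by
        intro x; rw [Tcube, Measure.restrict_eq_zero.mpr hσ0, integral_zero_measure]
      have hz : (∫⁻ x, ((‖Tcube K σ a l x‖₊ : ℝ≥0∞)) ^ p ∂ω) = 0 := by
        simp [hT, ENNReal.zero_rpow_of_pos hp0]
      rw [hz, ENNReal.zero_div]
      exact zero_le
    · -- notation
      set d : (Fin n → ℝ) → ℝ := fun x => Metric.infDist x (cubeSet a l) with hd
      set Lni : ℝ≥0∞ := (ENNReal.ofReal (l ^ n))⁻¹ with hLni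
      set Iω : ℝ≥0∞ := ∫⁻ x, ENNReal.ofReal ((l ^ n / (l + d x) ^ n) ^ p) ∂ω with hIω
      set Iσ : ℝ≥0∞ := ∫⁻ x, ENNReal.ofReal ((l ^ n / (l + d x) ^ n) ^ p') ∂σ with hIσdef
      have hln : (0:ℝ) < l^n := pow_pos hl n
      have hLne : ENNReal.ofReal (l^n) ≠ 0 := (ENNReal.ofReal_pos.mpr hln).ne'
      have hLni0 : Lni ≠ 0 := ENNReal.inv_ne_zero.mpr ENNReal.ofReal_ne_top
      have hLnitop : Lni ≠ ∞ := ENNReal.inv_ne_top.mpr hLne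
      -- split the integral
      rw [← lintegral_add_compl (fun x => ((‖Tcube K σ a l x‖₊ : ℝ≥0∞)) ^ p) hEmeas,
        ENNReal.add_div, add_comm ((c0 * Ap)^p)]
      refine add_le_add ?_ ?_
      · -- triple part
        have hTrp : Tr ^ p = ⨆ (a : Fin n → ℝ) (l : ℝ) (_ : 0 < l),
            (∫⁻ x in tripleCube a l, ((‖Tcube K σ a l x‖₊ : ℝ≥0∞)) ^ p ∂ω) / σ (cubeSet a l) := by
          rw [hTr, tripleTesting, ← ENNReal.rpow_mul, one_div_mul_cancel hpne, ENNReal.rpow_one]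
        rw [hTrp]
        exact le_iSup_of_le a (le_iSup_of_le l (le_iSup_of_le hl le_rfl))
      · -- tail part
        have hσQp : σ (cubeSet a l) ^ p ≠ ∞ :=
          (ENNReal.rpow_lt_top_of_nonneg hp0.le hQfin).ne
        have hc0top : c0 ^ p ≠ ∞ := (ENNReal.rpow_lt_top_of_nonneg hp0.le ENNReal.ofReal_ne_top).ne
        have hLnip : Lni ^ p ≠ ∞ := (ENNReal.rpow_lt_top_of_nonneg hp0.le hLnitop).ne
        have hfin : c0^p * Lni^p * σ (cubeSet a l)^p ≠ ∞ :=
          ENNReal.mul_ne_top (ENNReal.mul_ne_top hc0top hLnip) hσQp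
        -- pointwise bound
        have hpt : ∀ x ∈ (tripleCube a l)ᶜ, ((‖Tcube K σ a l x‖₊ : ℝ≥0∞)) ^ p ≤
            (c0^p * Lni^p * σ (cubeSet a l)^p) * ENNReal.ofReal ((l ^ n / (l + d x) ^ n) ^ p) := by
          intro x hx
          have hdx : 0 ≤ d x := Metric.infDist_nonneg
          have hldx : (0:ℝ) < (l + d x)^n := by positivity
          have hb := Tcube_bound K σ a hl hCCZ hK x hx
          calc ((‖Tcube K σ a l x‖₊ : ℝ≥0∞)) ^ p
              ≤ (ENNReal.ofReal (2^n * CCZ / (l + d x)^n) * σ (cubeSet a l)) ^ p :=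
                ENNReal.rpow_le_rpow hb hp0.le
            _ = ENNReal.ofReal (2^n * CCZ / (l + d x)^n) ^ p * σ (cubeSet a l) ^ p :=
                ENNReal.mul_rpow_of_nonneg _ _ hp0.le
            _ = ENNReal.ofReal ((2^n * CCZ / (l + d x)^n) ^ p) * σ (cubeSet a l) ^ p := by
                rw [ENNReal.ofReal_rpow_of_nonneg (by positivity) hp0.le]
            _ = (c0^p * Lni^p) * ENNReal.ofReal ((l ^ n / (l + d x) ^ n) ^ p)
                  * σ (cubeSet a l) ^ p := by
                congr 1
                have hreal : (2^n * CCZ / (l + d x)^n) ^ p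
                    = (2^n * CCZ / l^n) ^ p * (l ^ n / (l + d x) ^ n) ^ p := by
                  rw [← Real.mul_rpow (by positivity) (by positivity)]
                  congr 1
                  field_simp
                have hco : ENNReal.ofReal ((2^n * CCZ / l^n) ^ p) = c0^p * Lni^p := by
                  rw [Real.div_rpow (by positivity) hln.le,
                    ENNReal.ofReal_div_of_pos (Real.rpow_pos_of_pos hln p),
                    ← ENNReal.ofReal_rpow_of_nonneg (by positivity) hp0.le,
                    ← ENNReal.ofReal_rpow_of_nonneg hln.le hp0.le,
                    div_eq_mul_inv, ← ENNReal.inv_rpow]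
                rw [hreal, ENNReal.ofReal_mul (by positivity), hco]
            _ = (c0^p * Lni^p * σ (cubeSet a l)^p) * ENNReal.ofReal ((l ^ n / (l + d x) ^ n) ^ p) := by
                ring
        -- σQ ≤ Iσ
        have hIσ : σ (cubeSet a l) ≤ Iσ := by
          have h1 : ∀ᵐ x ∂σ, x ∈ cubeSet a l →
              (1:ℝ≥0∞) = ENNReal.ofReal ((l ^ n / (l + d x) ^ n) ^ p') := by
            refine Filter.Eventually.of_forall fun x hx => ?_
            rw [hd]
            simp only []
            rw [Metric.infDist_zero_of_mem hx, add_zero, div_self hln.ne', Real.one_rpow,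
              ENNReal.ofReal_one]
          calc σ (cubeSet a l) = ∫⁻ _ in cubeSet a l, 1 ∂σ := (setLIntegral_one _).symm
            _ = ∫⁻ x in cubeSet a l, ENNReal.ofReal ((l ^ n / (l + d x) ^ n) ^ p') ∂σ :=
                setLIntegral_congr_fun_ae hQmeas h1
            _ ≤ Iσ := setLIntegral_le_lintegral _ _
        -- Tap
        have hTap : ((Lni * Iω) ^ (1/p) * (Lni * Iσ) ^ (1/p')) ^ p
            = (Lni * Iω) * (Lni * Iσ) ^ (p - 1) := by
          rw [ENNReal.mul_rpow_of_nonneg _ _ hp0.le, ← ENNReal.rpow_mul, ← ENNReal.rpow_mul,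
            one_div_mul_cancel hpne, ENNReal.rpow_one, hpp'2]
        have hTapAp : (Lni * Iω) ^ (1/p) * (Lni * Iσ) ^ (1/p') ≤ Ap := by
          rw [hAp, tailedAp]
          exact le_iSup_of_le a (le_iSup_of_le l (le_iSup_of_le hl le_rfl))
        calc (∫⁻ x in (tripleCube a l)ᶜ, ((‖Tcube K σ a l x‖₊ : ℝ≥0∞)) ^ p ∂ω) / σ (cubeSet a l)
            ≤ (∫⁻ x in (tripleCube a l)ᶜ,
                (c0^p * Lni^p * σ (cubeSet a l)^p) * ENNReal.ofReal ((l ^ n / (l + d x) ^ n) ^ p) ∂ω)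
                / σ (cubeSet a l) :=
              ENNReal.div_le_div_right (setLIntegral_mono' hEmeas.compl hpt) _
          _ ≤ (∫⁻ x, (c0^p * Lni^p * σ (cubeSet a l)^p)
                * ENNReal.ofReal ((l ^ n / (l + d x) ^ n) ^ p) ∂ω) / σ (cubeSet a l) :=
              ENNReal.div_le_div_right (setLIntegral_le_lintegral _ _) _
          _ = ((c0^p * Lni^p * σ (cubeSet a l)^p) * Iω) / σ (cubeSet a l) := by
              rw [lintegral_const_mul' _ _ hfin]
          _ = c0^p * ((Lni * Iω) * (Lni * σ (cubeSet a l)) ^ (p - 1)) := by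
              rw [div_eq_mul_inv, ENNReal.mul_rpow_of_nonneg _ _ hp1]
              have hσ1 : σ (cubeSet a l) ^ p = σ (cubeSet a l) ^ (p - 1) * σ (cubeSet a l) := by
                nth_rewrite 3 [← ENNReal.rpow_one (σ (cubeSet a l))]
                rw [← ENNReal.rpow_add _ _ hσ0 hQfin, sub_add_cancel]
              have hL1 : Lni ^ p = Lni * Lni ^ (p - 1) := by
                nth_rewrite 2 [← ENNReal.rpow_one Lni]
                -- occurrence check
                rw [← ENNReal.rpow_add _ _ hLni0 hLnitop, add_sub_cancel]
              rw [hσ1, hL1]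
              have hcanc : σ (cubeSet a l) * (σ (cubeSet a l))⁻¹ = 1 :=
                ENNReal.mul_inv_cancel hσ0 hQfin
              calc c0^p * (Lni * Lni^(p-1)) * (σ (cubeSet a l)^(p-1) * σ (cubeSet a l)) * Iω
                    * (σ (cubeSet a l))⁻¹
                  = (c0^p * (Lni * Iω * (Lni^(p-1) * σ (cubeSet a l)^(p-1))))
                    * (σ (cubeSet a l) * (σ (cubeSet a l))⁻¹) := by ring
                _ = c0^p * (Lni * Iω * (Lni^(p-1) * σ (cubeSet a l)^(p-1))) := by
                    rw [hcanc, mul_one]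
          _ ≤ c0^p * ((Lni * Iω) * (Lni * Iσ) ^ (p - 1)) := by
              gcongr
          _ = (c0 * ((Lni * Iω) ^ (1/p) * (Lni * Iσ) ^ (1/p'))) ^ p := by
              rw [ENNReal.mul_rpow_of_nonneg _ _ hp0.le, hTap]
          _ ≤ (c0 * Ap) ^ p :=
              ENNReal.rpow_le_rpow (mul_le_mul_right hTapAp c0) hp0.le
  -- conclude
  have hsup : (⨆ (a : Fin n → ℝ) (l : ℝ) (_ : 0 < l),
      (∫⁻ x, ((‖Tcube K σ a l x‖₊ : ℝ≥0∞)) ^ p ∂ω) / σ (cubeSet a l))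
      ≤ (c0 * Ap)^p + Tr^p := by
    exact iSup_le fun a => iSup_le fun l => iSup_le fun hl => main a l hl
  calc fullTesting K p σ ω ≤ ((c0 * Ap)^p + Tr^p) ^ (1/p) := by
        rw [fullTesting]
        exact ENNReal.rpow_le_rpow hsup h1p.le
    _ ≤ c0 * Ap + Tr := by
        have h := ENNReal.rpow_add_rpow_le (c0 * Ap) Tr one_pos hp.le
        simpa using h
    _ ≤ (1 + c0) * Ap + (1 + c0) * Tr := by
        refine add_le_add (mul_le_mul_left le_add_self Ap) ?_
        nth_rewrite 1 [← one_mul Tr]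
        exact mul_le_mul_left le_self_add Tr
    _ = (1 + c0) * (Ap + Tr) := (mul_add _ _ _).symm
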